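/- The discharge-form inverse Lax curve φ̃_r is strictly convex on (0,∞); that is, for all 0 < h₁ < h₂ and t ∈ (0,1), φ̃_r(t·h₁ + (1−t)·h₂) < t·φ̃_r(h₁) + (1−t)·φ̃_r(h₂). -/

import Mathlib

/-- Inverse Lax curve through the right state `(hr, vr)`. -/
noncomputable def phir (g hr vr h : ℝ) : ℝ :=
  if h ≤ hr then vr - 2 * Real.sqrt (g * hr) + 2 * Real.sqrt (g * h)
  else vr + (h - hr) * Real.sqrt (g * (h + hr) / (2 * h * hr))

/-- Discharge-form inverse Lax curve through the right state. -/
noncomputable def phirTilde (g hr vr h : ℝ) : ℝ := h * phir g hr vr h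

open Set Real
noncomputable def f1 (g hr vr h : ℝ) : ℝ :=
  (vr - 2 * Real.sqrt (g * hr)) * h + 2 * Real.sqrt g * (h * Real.sqrt h)

noncomputable def f2 (g hr vr h : ℝ) : ℝ :=
  vr * h + Real.sqrt (g / (2 * hr)) * ((h - hr) * Real.sqrt (h ^ 2 + h * hr))

noncomputable def rareD (g hr vr h : ℝ) : ℝ :=
  (vr - 2 * Real.sqrt (g * hr)) + 3 * Real.sqrt g * Real.sqrt h

noncomputable def shockD (g hr vr h : ℝ) : ℝ :=
  vr + Real.sqrt (g / (2 * hr)) *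
    ((4 * h ^ 2 + h * hr - hr ^ 2) / (2 * Real.sqrt (h ^ 2 + h * hr)))

noncomputable def Dfun (g hr vr h : ℝ) : ℝ :=
  if h ≤ hr then rareD g hr vr h else shockD g hr vr h

lemma hasDeriv_f1 (g hr vr : ℝ) {x : ℝ} (hx : 0 < x) :
    HasDerivAt (f1 g hr vr) (rareD g hr vr x) x := by
  have hsx : Real.sqrt x ≠ 0 := by positivity
  have hs : HasDerivAt Real.sqrt (1 / (2 * Real.sqrt x)) x := Real.hasDerivAt_sqrt hx.ne'
  have h1 : HasDerivAt (fun h : ℝ => h * Real.sqrt h)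
      (1 * Real.sqrt x + x * (1 / (2 * Real.sqrt x))) x := (hasDerivAt_id x).mul hs
  have h2 : HasDerivAt (f1 g hr vr)
      ((vr - 2 * Real.sqrt (g * hr)) * 1 +
        2 * Real.sqrt g * (1 * Real.sqrt x + x * (1 / (2 * Real.sqrt x)))) x :=
    ((hasDerivAt_id x).const_mul _).add (h1.const_mul _)
  convert h2 using 1
  have hsq : Real.sqrt x ^ 2 = x := Real.sq_sqrt hx.le
  unfold rareD
  field_simp
  linear_combination (Real.sqrt g) * hsq

lemma hasDeriv_f2 (g hr vr : ℝ) (hhr : 0 < hr) {x : ℝ} (hx : 0 < x) :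
    HasDerivAt (f2 g hr vr) (shockD g hr vr x) x := by
  have hu : (0:ℝ) < x ^ 2 + x * hr := by positivity
  have hsu : (0:ℝ) < Real.sqrt (x ^ 2 + x * hr) := Real.sqrt_pos.2 hu
  have hU : HasDerivAt (fun h : ℝ => h ^ 2 + h * hr) (2 * x + hr) x := by
    have := ((hasDerivAt_pow 2 x).add ((hasDerivAt_id x).mul_const hr))
    exact this.congr_deriv (by norm_num <;> ring)
  have hS : HasDerivAt (fun h : ℝ => Real.sqrt (h ^ 2 + h * hr))
      ((2 * x + hr) / (2 * Real.sqrt (x ^ 2 + x * hr))) x := by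
    have := (Real.hasDerivAt_sqrt hu.ne').comp x hU
    exact this.congr_deriv (by ring)
  have hP : HasDerivAt (fun h : ℝ => (h - hr) * Real.sqrt (h ^ 2 + h * hr))
      (1 * Real.sqrt (x ^ 2 + x * hr) +
        (x - hr) * ((2 * x + hr) / (2 * Real.sqrt (x ^ 2 + x * hr)))) x :=
    ((hasDerivAt_id x).sub_const hr).mul hS
  have h2 : HasDerivAt (f2 g hr vr)
      (vr * 1 + Real.sqrt (g / (2 * hr)) *
        (1 * Real.sqrt (x ^ 2 + x * hr) +
          (x - hr) * ((2 * x + hr) / (2 * Real.sqrt (x ^ 2 + x * hr))))) x :=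
    (((hasDerivAt_id x).const_mul vr)).add (hP.const_mul _)
  convert h2 using 1
  unfold shockD
  have hsq : Real.sqrt (x ^ 2 + x * hr) ^ 2 = x ^ 2 + x * hr := Real.sq_sqrt hu.le
  have key : (4 * x ^ 2 + x * hr - hr ^ 2) / (2 * Real.sqrt (x ^ 2 + x * hr)) =
      1 * Real.sqrt (x ^ 2 + x * hr) +
        (x - hr) * ((2 * x + hr) / (2 * Real.sqrt (x ^ 2 + x * hr))) := by
    have hsq' : Real.sqrt (x * (x + hr)) ^ 2 = x * (x + hr) := Real.sq_sqrt (by positivity)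
    field_simp
    linear_combination (-2 : ℝ) * hsq'
  rw [key]
  ring

lemma phirTilde_eq_f1 (g hr vr : ℝ) (hg : 0 < g) {x : ℝ} (hx : 0 ≤ x) (hxr : x ≤ hr) :
    phirTilde g hr vr x = f1 g hr vr x := by
  unfold phirTilde phir f1
  rw [if_pos hxr, Real.sqrt_mul hg.le hr, Real.sqrt_mul hg.le x]
  ring

lemma phirTilde_eq_f2 (g hr vr : ℝ) (hg : 0 < g) (hhr : 0 < hr) {x : ℝ} (hxr : hr ≤ x) :
    phirTilde g hr vr x = f2 g hr vr x := by
  have hx : 0 < x := lt_of_lt_of_le hhr hxr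
  rcases eq_or_lt_of_le hxr with h | h
  · subst h
    unfold phirTilde phir f2
    rw [if_pos le_rfl]
    ring
  · unfold phirTilde phir f2
    rw [if_neg (not_le.2 h)]
    have key : x * Real.sqrt (g * (x + hr) / (2 * x * hr)) =
        Real.sqrt (g / (2 * hr)) * Real.sqrt (x ^ 2 + x * hr) := by
      rw [← Real.sqrt_mul (by positivity : (0:ℝ) ≤ g / (2 * hr)),
        ← Real.sqrt_sq hx.le, ← Real.sqrt_mul (by positivity : (0:ℝ) ≤ x ^ 2)]
      congr 1
      field_simp
      rw [Real.sq_sqrt (by positivity)]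
    calc x * (vr + (x - hr) * Real.sqrt (g * (x + hr) / (2 * x * hr)))
        = vr * x + (x - hr) * (x * Real.sqrt (g * (x + hr) / (2 * x * hr))) := by ring
      _ = vr * x + Real.sqrt (g / (2 * hr)) * ((x - hr) * Real.sqrt (x ^ 2 + x * hr)) := by
          rw [key]; ring

lemma rareD_junction (g hr vr : ℝ) (hg : 0 < g) (hhr : 0 < hr) :
    rareD g hr vr hr = vr + Real.sqrt (g * hr) := by
  unfold rareD
  rw [Real.sqrt_mul hg.le]
  ring

lemma shockD_junction (g hr vr : ℝ) (hg : 0 < g) (hhr : 0 < hr) :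
    shockD g hr vr hr = vr + Real.sqrt (g * hr) := by
  unfold shockD
  have h1 : Real.sqrt (hr ^ 2 + hr * hr) = Real.sqrt 2 * hr := by
    rw [show hr ^ 2 + hr * hr = 2 * hr ^ 2 by ring, Real.sqrt_mul (by norm_num),
      Real.sqrt_sq hhr.le]
  rw [h1]
  have h2 : Real.sqrt 2 ≠ 0 := by positivity
  have h3 : (4 * hr ^ 2 + hr * hr - hr ^ 2) / (2 * (Real.sqrt 2 * hr)) =
      Real.sqrt 2 * hr := by
    have : Real.sqrt 2 ^ 2 = 2 := Real.sq_sqrt (by norm_num)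
    field_simp
    linear_combination (-2 : ℝ) * this
  rw [h3]
  have h4 : Real.sqrt (g / (2 * hr)) * (Real.sqrt 2 * hr) = Real.sqrt (g * hr) := by
    have e1 : Real.sqrt (g / (2 * hr)) * (Real.sqrt 2 * hr) =
        Real.sqrt (g / (2 * hr) * 2) * hr := by
      rw [Real.sqrt_mul (by positivity : (0:ℝ) ≤ g / (2 * hr))]; ring
    have e2 : g / (2 * hr) * 2 = g / hr := by field_simp
    have e3 : g * hr = g / hr * hr ^ 2 := by field_simp
    rw [e1, e2, e3, Real.sqrt_mul (by positivity : (0:ℝ) ≤ g / hr), Real.sqrt_sq hhr.le]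
  rw [h4]

lemma hasDeriv_sqrtu (hr : ℝ) {x : ℝ} (hu : (0:ℝ) < x ^ 2 + x * hr) :
    HasDerivAt (fun h : ℝ => Real.sqrt (h ^ 2 + h * hr))
      ((2 * x + hr) / (2 * Real.sqrt (x ^ 2 + x * hr))) x := by
  have hU : HasDerivAt (fun h : ℝ => h ^ 2 + h * hr) (2 * x + hr) x := by
    have := ((hasDerivAt_pow 2 x).add ((hasDerivAt_id x).mul_const hr))
    exact this.congr_deriv (by norm_num <;> ring)
  have := (Real.hasDerivAt_sqrt hu.ne').comp x hU
  exact this.congr_deriv (by ring)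

lemma shockD_strictMono (g hr vr : ℝ) (hg : 0 < g) (hhr : 0 < hr) :
    StrictMonoOn (shockD g hr vr) (Ici hr) := by
  have hk : 0 < Real.sqrt (g / (2 * hr)) := Real.sqrt_pos.2 (by positivity)
  apply strictMonoOn_of_deriv_pos (convex_Ici hr)
  · apply ContinuousOn.add continuousOn_const
    apply ContinuousOn.mul continuousOn_const
    apply ContinuousOn.div
    · fun_prop
    · fun_prop
    · intro x hx
      have hx0 : 0 < x := lt_of_lt_of_le hhr hx
      have hu : (0:ℝ) < x ^ 2 + x * hr :=
        add_pos_of_nonneg_of_pos (sq_nonneg x) (mul_pos hx0 hhr)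
      have := Real.sqrt_pos.2 hu
      positivity
  · intro x hx
    rw [interior_Ici] at hx
    have hx0 : 0 < x := hhr.trans hx
    have hu : (0:ℝ) < x ^ 2 + x * hr :=
      add_pos_of_nonneg_of_pos (sq_nonneg x) (mul_pos hx0 hhr)
    have hs : 0 < Real.sqrt (x ^ 2 + x * hr) := Real.sqrt_pos.2 hu
    have hsq : Real.sqrt (x ^ 2 + x * hr) ^ 2 = x ^ 2 + x * hr := Real.sq_sqrt hu.le
    have hp : HasDerivAt (fun h : ℝ => 4 * h ^ 2 + h * hr - hr ^ 2) (8 * x + hr) x := by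
      have := (((hasDerivAt_pow 2 x).const_mul 4).add
        ((hasDerivAt_id x).mul_const hr)).sub_const (hr ^ 2)
      exact this.congr_deriv (by norm_num <;> ring)
    have hq : HasDerivAt (fun h : ℝ => 2 * Real.sqrt (h ^ 2 + h * hr))
        (2 * ((2 * x + hr) / (2 * Real.sqrt (x ^ 2 + x * hr)))) x :=
      (hasDeriv_sqrtu hr hu).const_mul 2
    have hdiv := hp.div hq (by positivity)
    have hD : HasDerivAt (shockD g hr vr)
        (0 + Real.sqrt (g / (2 * hr)) *
          (((8 * x + hr) * (2 * Real.sqrt (x ^ 2 + x * hr)) -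
            (4 * x ^ 2 + x * hr - hr ^ 2) *
              (2 * ((2 * x + hr) / (2 * Real.sqrt (x ^ 2 + x * hr))))) /
            (2 * Real.sqrt (x ^ 2 + x * hr)) ^ 2)) x :=
      (hasDerivAt_const x vr).add (hdiv.const_mul _)
    rw [hD.deriv]
    have hN : 0 < 8 * x ^ 3 + 12 * x ^ 2 * hr + 3 * x * hr ^ 2 + hr ^ 3 := by
      nlinarith [pow_pos hx0 3, mul_pos (mul_pos hx0 hx0) hhr,
        mul_pos hx0 (mul_pos hhr hhr), pow_pos hhr 3]
    have hQ : ((8 * x + hr) * (2 * Real.sqrt (x ^ 2 + x * hr)) -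
            (4 * x ^ 2 + x * hr - hr ^ 2) *
              (2 * ((2 * x + hr) / (2 * Real.sqrt (x ^ 2 + x * hr))))) /
            (2 * Real.sqrt (x ^ 2 + x * hr)) ^ 2 =
        (8 * x ^ 3 + 12 * x ^ 2 * hr + 3 * x * hr ^ 2 + hr ^ 3) /
          (4 * Real.sqrt (x ^ 2 + x * hr) ^ 3) := by
      have hsq' : Real.sqrt (x * (x + hr)) ^ 2 = x * (x + hr) := Real.sq_sqrt (by positivity)
      field_simp
      linear_combination (64 * x + 8 * hr) * hsq'
    rw [hQ]
    have h4 : 0 < 4 * Real.sqrt (x ^ 2 + x * hr) ^ 3 := by positivity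
    have := mul_pos hk (div_pos hN h4)
    linarith

lemma hasDeriv_phirTilde (g hr vr : ℝ) (hg : 0 < g) (hhr : 0 < hr) :
    ∀ x ∈ Ioi (0:ℝ), HasDerivAt (phirTilde g hr vr) (Dfun g hr vr x) x := by
  intro x hx
  simp only [mem_Ioi] at hx
  rcases lt_trichotomy x hr with h | h | h
  · have hD := hasDeriv_f1 g hr vr hx
    have hE : Dfun g hr vr x = rareD g hr vr x := if_pos h.le
    rw [hE]
    apply hD.congr_of_eventuallyEq
    filter_upwards [Ioo_mem_nhds hx h] with y hy
    exact phirTilde_eq_f1 g hr vr hg hy.1.le hy.2.le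
  · subst h
    have hE : Dfun g x vr x = vr + Real.sqrt (g * x) := by
      unfold Dfun
      rw [if_pos le_rfl, rareD_junction g x vr hg hx]
    rw [hE]
    have l1 : HasDerivWithinAt (f1 g x vr) (vr + Real.sqrt (g * x)) (Iic x) x := by
      have h0 := hasDeriv_f1 g x vr hx
      rw [rareD_junction g x vr hg hx] at h0
      exact h0.hasDerivWithinAt
    have l2 : HasDerivWithinAt (phirTilde g x vr) (vr + Real.sqrt (g * x)) (Iic x) x := by
      apply l1.congr_of_eventuallyEq
      · filter_upwards [self_mem_nhdsWithin,
          mem_nhdsWithin_of_mem_nhds (Ioi_mem_nhds hx)] with y hy1 hy2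
        exact phirTilde_eq_f1 g x vr hg (le_of_lt hy2) hy1
      · exact phirTilde_eq_f1 g x vr hg hx.le le_rfl
    have r1 : HasDerivWithinAt (f2 g x vr) (vr + Real.sqrt (g * x)) (Ici x) x := by
      have h0 := hasDeriv_f2 g x vr hx hx
      rw [shockD_junction g x vr hg hx] at h0
      exact h0.hasDerivWithinAt
    have r2 : HasDerivWithinAt (phirTilde g x vr) (vr + Real.sqrt (g * x)) (Ici x) x := by
      apply r1.congr_of_eventuallyEq
      · filter_upwards [self_mem_nhdsWithin] with y hy1
        exact phirTilde_eq_f2 g x vr hg hx hy1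
      · exact phirTilde_eq_f2 g x vr hg hx le_rfl
    have := l2.union r2
    rw [Iic_union_Ici, hasDerivWithinAt_univ] at this
    exact this
  · have hD := hasDeriv_f2 g hr vr hhr hx
    have hE : Dfun g hr vr x = shockD g hr vr x := if_neg (not_le.2 h)
    rw [hE]
    apply hD.congr_of_eventuallyEq
    filter_upwards [Ioi_mem_nhds h] with y hy
    exact phirTilde_eq_f2 g hr vr hg hhr hy.le

lemma Dfun_strictMono (g hr vr : ℝ) (hg : 0 < g) (hhr : 0 < hr) :
    StrictMonoOn (Dfun g hr vr) (Ioi 0) := by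
  have hsg : 0 < Real.sqrt g := Real.sqrt_pos.2 hg
  intro a ha b hb hab
  simp only [mem_Ioi] at ha hb
  unfold Dfun
  by_cases hbr : b ≤ hr
  · rw [if_pos (hab.le.trans hbr), if_pos hbr]
    unfold rareD
    have := Real.sqrt_lt_sqrt ha.le hab
    nlinarith
  · push_neg at hbr
    rw [if_neg (not_le.2 hbr)]
    have hSb := shockD_strictMono g hr vr hg hhr
    by_cases har : a ≤ hr
    · rw [if_pos har]
      have k1 : rareD g hr vr a ≤ rareD g hr vr hr := by
        unfold rareD
        have := Real.sqrt_le_sqrt har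
        nlinarith
      have k2 : rareD g hr vr hr = shockD g hr vr hr := by
        rw [rareD_junction g hr vr hg hhr, shockD_junction g hr vr hg hhr]
      have k3 : shockD g hr vr hr < shockD g hr vr b :=
        hSb self_mem_Ici (mem_Ici.2 hbr.le) hbr
      calc rareD g hr vr a ≤ shockD g hr vr hr := k2 ▸ k1
        _ < shockD g hr vr b := k3
    · push_neg at har
      rw [if_neg (not_le.2 har)]
      exact hSb (mem_Ici.2 har.le) (mem_Ici.2 hbr.le) hab


/-- The discharge-form inverse Lax curve is strictly convex on `(0, ∞)`. -/
theorem phirTilde_strictConvex (g hr vr : ℝ) (hg : 0 < g) (hhr : 0 < hr) :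
    ∀ h₁ h₂ t : ℝ, 0 < h₁ → h₁ < h₂ → 0 < t → t < 1 →
      phirTilde g hr vr (t * h₁ + (1 - t) * h₂) <
        t * phirTilde g hr vr h₁ + (1 - t) * phirTilde g hr vr h₂ := by
  have hderiv := hasDeriv_phirTilde g hr vr hg hhr
  have hconv : StrictConvexOn ℝ (Ioi 0) (phirTilde g hr vr) := by
    apply StrictMonoOn.strictConvexOn_of_deriv (convex_Ioi 0)
    · exact fun x hx => (hderiv x hx).continuousAt.continuousWithinAt
    · rw [interior_Ioi]
      intro a ha b hb hab
      rw [(hderiv a ha).deriv, (hderiv b hb).deriv]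
      exact Dfun_strictMono g hr vr hg hhr ha hb hab
  intro h₁ h₂ t h1 hlt ht0 ht1
  have := hconv.2 (mem_Ioi.2 h1) (mem_Ioi.2 (h1.trans hlt)) (ne_of_lt hlt) ht0
    (by linarith : (0:ℝ) < 1 - t) (by ring)
  simpa [smul_eq_mul] using this
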